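/- Let (T₁, T₂) be a twisted triality pair and set K(x) = conj(T₁(x̄)). Then for all x, y ∈ 𝕆 one has K(x)·T₁(y) = T₂(x·y) and T₂(x)·K(y) = K(x·y); in other words, the triples (K, T₁, T₂) and (T₂, K, K) are again triality triples. -/

import Mathlib

noncomputable section

open scoped Quaternion

/-- The complexified quaternions. -/
abbrev Hq : Type := Quaternion ℂ

theorem q_mul_smul (t : ℂ) (a b : Hq) : a * (t • b) = t • (a * b) := by
  rw [← Quaternion.coe_mul_eq_smul, ← Quaternion.coe_mul_eq_smul, ← mul_assoc,
    ← Quaternion.coe_commutes, mul_assoc]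

theorem q_smul_mul (t : ℂ) (a b : Hq) : (t • a) * b = t • (a * b) := by
  rw [← Quaternion.coe_mul_eq_smul, ← Quaternion.coe_mul_eq_smul, mul_assoc]

/-- The complexified octonions, via the Cayley–Dickson construction. -/
abbrev Oct : Type := Hq × Hq

namespace Oct

/-- Octonion multiplication (Cayley–Dickson construction). -/
def omul (x y : Oct) : Oct := (x.1 * y.1 - star y.2 * x.2, y.2 * x.1 + x.2 * star y.1)

/-- Octonion conjugation. -/
def oconj (x : Oct) : Oct := (star x.1, -x.2)

/-- The unit octonion. -/
def oone : Oct := (1, 0)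

/-- Real part of an octonion: the unique scalar with `x + oconj x = (2 * oRe x) • oone`. -/
def oRe (x : Oct) : ℂ := x.1.re

/-- Squared norm of an octonion: the unique scalar with `omul x (oconj x) = onormSq x • oone`. -/
def onormSq (x : Oct) : ℂ := Quaternion.normSq x.1 + Quaternion.normSq x.2

theorem omul_add (z x y : Oct) : omul z (x + y) = omul z x + omul z y := by
  have h : ∀ a b : Hq, star (a + b) = star a + star b := fun a b => star_add a b
  simp only [omul, Prod.fst_add, Prod.snd_add, h, mul_add, add_mul, Prod.mk_add_mk,
    Prod.mk.injEq]
  constructor <;> abel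

theorem add_omul (x y z : Oct) : omul (x + y) z = omul x z + omul y z := by
  simp only [omul, Prod.fst_add, Prod.snd_add, star_add, mul_add, add_mul, Prod.mk_add_mk,
    Prod.mk.injEq]
  constructor <;> abel

theorem omul_smul (t : ℂ) (z x : Oct) : omul z (t • x) = t • omul z x := by
  simp only [omul, Prod.smul_fst, Prod.smul_snd, Quaternion.star_smul, q_smul_mul,
    q_mul_smul, Prod.smul_mk, smul_sub, smul_add]

theorem smul_omul (t : ℂ) (x z : Oct) : omul (t • x) z = t • omul x z := by
  simp only [omul, Prod.smul_fst, Prod.smul_snd, Quaternion.star_smul, q_smul_mul,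
    q_mul_smul, Prod.smul_mk, smul_sub, smul_add]

/-- Left multiplication `L_z` as a `ℂ`-linear endomorphism of the octonions. -/
def Lmul (z : Oct) : Oct →ₗ[ℂ] Oct where
  toFun x := omul z x
  map_add' x y := omul_add z x y
  map_smul' t x := omul_smul t z x

/-- Right multiplication `R_z` as a `ℂ`-linear endomorphism of the octonions. -/
def Rmul (z : Oct) : Oct →ₗ[ℂ] Oct where
  toFun x := omul x z
  map_add' x y := add_omul x y z
  map_smul' t x := smul_omul t x z

end Oct

namespace Oct

/-- The octonionic determinant of the hermitian matrix
`[[λ₁, c, b̄], [c̄, λ₂, a], [b, ā, λ₃]]`. -/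
def detO (l1 l2 l3 : ℂ) (a b c : Oct) : ℂ :=
  l1 * l2 * l3 + 2 * oRe (omul c (omul a b)) - l1 * onormSq a - l2 * onormSq b - l3 * onormSq c

/-- The associator `[c,b,a] = (c·b)·a − c·(b·a)`. -/
def assoc (c b a : Oct) : Oct := omul (omul c b) a - omul c (omul b a)

/-- `φ(c,b,a) = (1/2)·Re((c·b̄ − b̄·c)·a)`. -/
def phi (c b a : Oct) : ℂ := (1 / 2) * oRe (omul (omul c (oconj b) - omul (oconj b) c) a)

/-- The Ogievetskiî–Dray–Manogue sextic. -/
def SODM (l1 l2 l3 : ℂ) (a b c : Oct) : ℂ :=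
  detO l1 l2 l3 a b c ^ 2 - 4 * phi c b a * detO l1 l2 l3 a b c - onormSq (assoc c b a)

/-- The Cartan cubic `C'` of the hermitian matrix `[[λ₁, c̄, ā], [c, λ₂, b], [a, b̄, λ₃]]`. -/
def cartan' (l1 l2 l3 : ℂ) (a b c : Oct) : ℂ :=
  detO l1 l2 l3 a b c - 2 * oRe (omul c (omul a b)) + 2 * oRe (omul (oconj c) (omul b a))

/-- The sextic `𝔖`. -/
def frakS (l1 l2 l3 : ℂ) (a b c : Oct) : ℂ :=
  (l1 * onormSq a + l2 * onormSq b + l3 * onormSq c - l1 * l2 * l3) ^ 2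
    - 4 * (l1 * onormSq a + l2 * onormSq b + l3 * onormSq c - l1 * l2 * l3)
        * oRe c * oRe (omul a b)
    + 4 * (onormSq b * onormSq a * oRe c ^ 2 + onormSq c * oRe (omul a b) ^ 2
        - onormSq a * onormSq b * onormSq c)

/-- The endomorphism `M_A` of `𝕆³` attached to
`A = [[λ₁, c, b̄], [c̄, λ₂, a], [b, ā, λ₃]] ∈ J₃(𝕆)`. -/
def MA (l1 l2 l3 : ℂ) (a b c : Oct) : Oct × Oct × Oct →ₗ[ℂ] Oct × Oct × Oct where
  toFun p := (l1 • p.1 + omul c p.2.1 + omul (oconj b) p.2.2,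
              omul (oconj c) p.1 + l2 • p.2.1 + omul a p.2.2,
              omul b p.1 + omul (oconj a) p.2.1 + l3 • p.2.2)
  map_add' p q := by
    simp only [Prod.fst_add, Prod.snd_add, omul_add, smul_add, Prod.mk_add_mk, Prod.mk.injEq]
    refine ⟨?_, ?_, ?_⟩ <;> abel
  map_smul' t p := by
    simp only [Prod.smul_fst, Prod.smul_snd, omul_smul, smul_comm t, Prod.smul_mk, smul_add,
      RingHom.id_apply]

/-- The endomorphism `N_A` of `𝕆³` of the twisted octonionic eigenvalue problem. -/
def NA (l1 l2 l3 : ℂ) (a b c : Oct) : Oct × Oct × Oct →ₗ[ℂ] Oct × Oct × Oct where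
  toFun p := (l1 • p.1 + omul p.2.1 c + omul (oconj b) p.2.2,
              omul p.1 (oconj c) + l2 • p.2.1 + omul a p.2.2,
              omul b p.1 + omul (oconj a) p.2.1 + l3 • p.2.2)
  map_add' p q := by
    simp only [Prod.fst_add, Prod.snd_add, omul_add, add_omul, smul_add, Prod.mk_add_mk,
      Prod.mk.injEq]
    refine ⟨?_, ?_, ?_⟩ <;> abel
  map_smul' t p := by
    simp only [Prod.smul_fst, Prod.smul_snd, omul_smul, smul_omul, smul_comm t, Prod.smul_mk,
      smul_add, RingHom.id_apply]

/-- The exceptional Jordan algebra `J₃(𝕆)`, as the 27-dimensional space of tuples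
`(λ₁, λ₂, λ₃, a, b, c)`. -/
abbrev J3 : Type := ℂ × ℂ × ℂ × Oct × Oct × Oct

def MAj (A : J3) : Oct × Oct × Oct →ₗ[ℂ] Oct × Oct × Oct :=
  MA A.1 A.2.1 A.2.2.1 A.2.2.2.1 A.2.2.2.2.1 A.2.2.2.2.2

def NAj (A : J3) : Oct × Oct × Oct →ₗ[ℂ] Oct × Oct × Oct :=
  NA A.1 A.2.1 A.2.2.1 A.2.2.2.1 A.2.2.2.2.1 A.2.2.2.2.2

def SODMj (A : J3) : ℂ := SODM A.1 A.2.1 A.2.2.1 A.2.2.2.1 A.2.2.2.2.1 A.2.2.2.2.2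

def cartan'j (A : J3) : ℂ := cartan' A.1 A.2.1 A.2.2.1 A.2.2.2.1 A.2.2.2.2.1 A.2.2.2.2.2

def frakSj (A : J3) : ℂ := frakS A.1 A.2.1 A.2.2.1 A.2.2.2.1 A.2.2.2.2.1 A.2.2.2.2.2

/-- A twisted triality pair: a pair of `ℂ`-linear norm-preserving bijections of `𝕆` with
`T₁(x)·T₂(y) = T₁(x·y)` for all `x, y`. -/
def TwistedPair (T1 T2 : Oct →ₗ[ℂ] Oct) : Prop :=
  Function.Bijective T1 ∧ Function.Bijective T2 ∧
    (∀ x, onormSq (T1 x) = onormSq x) ∧ (∀ x, onormSq (T2 x) = onormSq x) ∧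
    ∀ x y, omul (T1 x) (T2 y) = T1 (omul x y)

/-- `K(x) = conj (T₁ x̄)`. -/
def Kmap (T1 : Oct →ₗ[ℂ] Oct) (x : Oct) : Oct := oconj (T1 (oconj x))

/-- The twisted `Spin₇`-action on `J₃(𝕆)`:
`(T₁,T₂)·(λ₁, λ₂, λ₃, a, b, c) = (λ₁, λ₂, λ₃, T₁(a), K(b), T₂(c))`. -/
def spinAct (T1 T2 : Oct →ₗ[ℂ] Oct) (A : J3) : J3 :=
  (A.1, A.2.1, A.2.2.1, T1 A.2.2.2.1, Kmap T1 A.2.2.2.2.1, T2 A.2.2.2.2.2)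

/-- The hermitian matrix `[[λ₁, c, b̄], [c̄, λ₂, a], [b, ā, λ₃]]` attached to `A ∈ J₃(𝕆)`,
with complex scalars embedded as multiples of the unit octonion. -/
def toMat (A : J3) : Matrix (Fin 3) (Fin 3) Oct :=
  !![A.1 • oone, A.2.2.2.2.2, oconj A.2.2.2.2.1;
     oconj A.2.2.2.2.2, A.2.1 • oone, A.2.2.2.1;
     A.2.2.2.2.1, oconj A.2.2.2.1, A.2.2.1 • oone]

/-- The action of a (special linear) complex `3×3` matrix `C` on `J₃(𝕆)`, sending the hermitian
matrix `M` of `A` to `Cᵀ · M · C` (the entries of `C` being central scalars). -/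
def slAct (C : Matrix (Fin 3) (Fin 3) ℂ) (A : J3) : J3 :=
  let M : Matrix (Fin 3) (Fin 3) Oct :=
    Matrix.of fun i j => ∑ k, ∑ l, (C k i * C l j) • toMat A k l
  (oRe (M 0 0), oRe (M 1 1), oRe (M 2 2), M 1 2, M 2 0, M 0 1)

/-- The coordinates of `A ∈ J₃(𝕆)` in the fixed standard `ℂ`-basis of `ℂ³ × 𝕆³`. -/
def coords (A : J3) : Fin 27 → ℂ :=
  ![A.1, A.2.1, A.2.2.1,
    A.2.2.2.1.1.re, A.2.2.2.1.1.imI, A.2.2.2.1.1.imJ, A.2.2.2.1.1.imK,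
    A.2.2.2.1.2.re, A.2.2.2.1.2.imI, A.2.2.2.1.2.imJ, A.2.2.2.1.2.imK,
    A.2.2.2.2.1.1.re, A.2.2.2.2.1.1.imI, A.2.2.2.2.1.1.imJ, A.2.2.2.2.1.1.imK,
    A.2.2.2.2.1.2.re, A.2.2.2.2.1.2.imI, A.2.2.2.2.1.2.imJ, A.2.2.2.2.1.2.imK,
    A.2.2.2.2.2.1.re, A.2.2.2.2.2.1.imI, A.2.2.2.2.2.1.imJ, A.2.2.2.2.2.1.imK,
    A.2.2.2.2.2.2.re, A.2.2.2.2.2.2.imI, A.2.2.2.2.2.2.imJ, A.2.2.2.2.2.2.imK]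

end Oct

namespace Oct

lemma oconj_oconj (x : Oct) : oconj (oconj x) = x := by
  simp [oconj]

lemma oconj_oone : oconj oone = oone := by
  simp [oconj, oone]

lemma oconj_smul' (t : ℂ) (x : Oct) : oconj (t • x) = t • oconj x := by
  simp [oconj, Quaternion.star_smul, Prod.smul_mk]

lemma oconj_add' (x y : Oct) : oconj (x + y) = oconj x + oconj y := by
  simp [oconj, star_add, Prod.mk_add_mk]; exact ⟨(fun a b => star_add a b : ∀ a b : Hq, star (a + b) = star a + star b) _ _, add_comm _ _⟩

lemma omul_oone (x : Oct) : omul x oone = x := by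
  simp [omul, oone]

lemma oone_omul (x : Oct) : omul oone x = x := by
  simp [omul, oone]

lemma onormSq_oone : onormSq oone = 1 := by
  simp [onormSq, oone]

lemma onormSq_oconj (x : Oct) : onormSq (oconj x) = onormSq x := by
  simp [onormSq, oconj, Quaternion.normSq_star]

lemma oRe_smul' (t : ℂ) (x : Oct) : oRe (t • x) = t * oRe x := by
  simp [oRe]

lemma onormSq_smul' (t : ℂ) (x : Oct) : onormSq (t • x) = t ^ 2 * onormSq x := by
  simp only [onormSq, Prod.smul_fst, Prod.smul_snd, Quaternion.normSq_def']
  simp [Quaternion.re_smul]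
  ring

lemma onormSq_add_oone (x : Oct) : onormSq (x + oone) = onormSq x + 2 * oRe x + 1 := by
  simp only [onormSq, oone, oRe, Prod.fst_add, Prod.snd_add, Quaternion.normSq_def']
  simp [Quaternion.re_add, Quaternion.imI_add, Quaternion.imJ_add, Quaternion.imK_add]
  ring

set_option maxHeartbeats 2000000 in
lemma omul_oconj_self (a b : Oct) : omul (oconj a) (omul a b) = onormSq a • b := by
  obtain ⟨a1, a2⟩ := a; obtain ⟨b1, b2⟩ := b
  simp only [omul, oconj, onormSq, Prod.smul_mk, Prod.mk.injEq]
  constructor <;>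
  · ext <;>
      simp only [Quaternion.re_mul, Quaternion.imI_mul, Quaternion.imJ_mul, Quaternion.imK_mul,
        Quaternion.normSq_def', Quaternion.re_smul, Quaternion.imI_smul, Quaternion.imJ_smul,
        Quaternion.imK_smul, Quaternion.re_sub, Quaternion.imI_sub, Quaternion.imJ_sub,
        Quaternion.imK_sub, Quaternion.re_add, Quaternion.imI_add, Quaternion.imJ_add,
        Quaternion.imK_add, Quaternion.re_star, Quaternion.imI_star, Quaternion.imJ_star,
        Quaternion.imK_star, Quaternion.re_neg, Quaternion.imI_neg, Quaternion.imJ_neg,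
        Quaternion.imK_neg, smul_eq_mul] <;> ring

set_option maxHeartbeats 2000000 in
lemma oconj_omul' (x y : Oct) : oconj (omul x y) = omul (oconj y) (oconj x) := by
  obtain ⟨a1, a2⟩ := x; obtain ⟨b1, b2⟩ := y
  simp only [omul, oconj, Prod.mk.injEq]
  constructor <;>
  · ext <;>
      simp only [Quaternion.re_mul, Quaternion.imI_mul, Quaternion.imJ_mul, Quaternion.imK_mul,
        Quaternion.re_sub, Quaternion.imI_sub, Quaternion.imJ_sub, Quaternion.imK_sub,
        Quaternion.re_add, Quaternion.imI_add, Quaternion.imJ_add, Quaternion.imK_add,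
        Quaternion.re_star, Quaternion.imI_star, Quaternion.imJ_star, Quaternion.imK_star,
        Quaternion.re_neg, Quaternion.imI_neg, Quaternion.imJ_neg, Quaternion.imK_neg] <;> ring

/-- Key identity: `N(x) • (K(x)·T₁(y)) = N(x) • T₂(x·y)`. -/
lemma key_smul (T1 T2 : Oct →ₗ[ℂ] Oct) (h : TwistedPair T1 T2) (x y : Oct) :
    onormSq x • omul (Kmap T1 x) (T1 y) = onormSq x • T2 (omul x y) := by
  obtain ⟨-, -, hn1, -, hT⟩ := h
  have h1 : omul (T1 (oconj x)) (T2 (omul x y)) = onormSq x • T1 y := by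
    rw [hT, omul_oconj_self, map_smul]
  calc onormSq x • omul (Kmap T1 x) (T1 y)
      = omul (Kmap T1 x) (onormSq x • T1 y) := (omul_smul _ _ _).symm
    _ = omul (oconj (T1 (oconj x))) (omul (T1 (oconj x)) (T2 (omul x y))) := by
        rw [h1]; rfl
    _ = onormSq (T1 (oconj x)) • T2 (omul x y) := omul_oconj_self _ _
    _ = onormSq x • T2 (omul x y) := by rw [hn1, onormSq_oconj]

lemma Kmap_oone_omul (T1 T2 : Oct →ₗ[ℂ] Oct) (h : TwistedPair T1 T2) (z : Oct) :
    omul (Kmap T1 oone) (T1 z) = T2 z := by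
  obtain ⟨-, -, hn1, -, hT⟩ := h
  have h1 : omul (T1 oone) (T2 z) = T1 z := by rw [hT, oone_omul]
  calc omul (Kmap T1 oone) (T1 z)
      = omul (oconj (T1 oone)) (omul (T1 oone) (T2 z)) := by rw [h1]; simp [Kmap, oconj_oone]
    _ = onormSq (T1 oone) • T2 z := omul_oconj_self _ _
    _ = T2 z := by rw [hn1, onormSq_oone, one_smul]

/-- The first derived triality identity. -/
lemma first_identity (T1 T2 : Oct →ₗ[ℂ] Oct) (h : TwistedPair T1 T2) (x y : Oct) :
    omul (Kmap T1 x) (T1 y) = T2 (omul x y) := by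
  set N : ℂ := onormSq x with hN
  set r : ℂ := oRe x with hr
  set B : Oct := omul (Kmap T1 x) (T1 y) - T2 (omul x y) with hB
  have ht : ∀ t : ℂ, ((t ^ 2 * N + 2 * t * r + 1) * t) • B = 0 := by
    intro t
    have hK : Kmap T1 (t • x + oone) = t • Kmap T1 x + Kmap T1 oone := by
      simp only [Kmap, oconj_add', oconj_smul', map_add, map_smul]
    have hmul : omul (t • x + oone) y = t • omul x y + y := by
      rw [add_omul, smul_omul, oone_omul]
    have hNval : onormSq (t • x + oone) = t ^ 2 * N + 2 * t * r + 1 := by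
      rw [onormSq_add_oone, onormSq_smul', oRe_smul']; ring
    have := key_smul T1 T2 h (t • x + oone) y
    rw [hK, hmul, hNval, add_omul, smul_omul, Kmap_oone_omul T1 T2 h, map_add, map_smul] at this
    have h2 : (t ^ 2 * N + 2 * t * r + 1) • (t • B) = 0 := by
      rw [hB, smul_sub, smul_sub, sub_eq_zero]
      calc (t ^ 2 * N + 2 * t * r + 1) • t • omul (Kmap T1 x) (T1 y)
          = (t ^ 2 * N + 2 * t * r + 1) • (t • omul (Kmap T1 x) (T1 y) + T2 y)
            - (t ^ 2 * N + 2 * t * r + 1) • T2 y := by rw [smul_add]; abel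
        _ = (t ^ 2 * N + 2 * t * r + 1) • (t • T2 (omul x y) + T2 y)
            - (t ^ 2 * N + 2 * t * r + 1) • T2 y := by rw [this]
        _ = (t ^ 2 * N + 2 * t * r + 1) • t • T2 (omul x y) := by rw [smul_add]; abel
    rw [mul_smul]; exact h2
  have e1 := ht 1
  have e2 := ht (-1)
  have e3 := ht 2
  have h6 : (6 : ℂ) • B = 0 := by
    have hcomb : (6:ℂ) • B = (6:ℂ) • ((((1:ℂ) ^ 2 * N + 2 * 1 * r + 1) * 1) • B)
        - (2:ℂ) • (((((-1):ℂ) ^ 2 * N + 2 * (-1) * r + 1) * (-1)) • B)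
        - (1:ℂ) • ((((2:ℂ) ^ 2 * N + 2 * 2 * r + 1) * 2) • B) := by module
    rw [hcomb, e1, e2, e3, smul_zero, smul_zero, smul_zero, sub_zero, sub_zero]
  have hB0 : B = 0 := by
    have h7 : B = (6:ℂ)⁻¹ • ((6:ℂ) • B) := by rw [smul_smul]; norm_num
    rw [h7, h6, smul_zero]
  rw [hB] at hB0
  exact sub_eq_zero.mp hB0

lemma T2_oconj (T1 T2 : Oct →ₗ[ℂ] Oct) (h : TwistedPair T1 T2) (x : Oct) :
    T2 (oconj x) = oconj (T2 x) := by
  have h1 := first_identity T1 T2 h x oone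
  rw [omul_oone] at h1
  calc T2 (oconj x) = T2 (omul oone (oconj x)) := by rw [oone_omul]
    _ = omul (Kmap T1 oone) (T1 (oconj x)) := (first_identity T1 T2 h oone (oconj x)).symm
    _ = omul (oconj (T1 oone)) (oconj (Kmap T1 x)) := by
        simp [Kmap, oconj_oone, oconj_oconj]
    _ = oconj (omul (Kmap T1 x) (T1 oone)) := by rw [oconj_omul']
    _ = oconj (T2 x) := by rw [h1]

lemma second_identity (T1 T2 : Oct →ₗ[ℂ] Oct) (h : TwistedPair T1 T2) (x y : Oct) :
    omul (T2 x) (Kmap T1 y) = Kmap T1 (omul x y) := by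
  have hT := h.2.2.2.2
  symm
  calc Kmap T1 (omul x y)
      = oconj (T1 (omul (oconj y) (oconj x))) := by rw [Kmap, oconj_omul']
    _ = oconj (omul (T1 (oconj y)) (T2 (oconj x))) := by rw [hT]
    _ = omul (oconj (T2 (oconj x))) (oconj (T1 (oconj y))) := by rw [oconj_omul']
    _ = omul (T2 x) (Kmap T1 y) := by
        rw [T2_oconj T1 T2 h, oconj_oconj]; rfl

end Oct

namespace Oct

/-- If `(T₁, T₂)` is a twisted triality pair and `K(x) = conj (T₁ x̄)`, then
`K(x)·T₁(y) = T₂(x·y)` and `T₂(x)·K(y) = K(x·y)` for all `x, y ∈ 𝕆`; that is, the triples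
`(K, T₁, T₂)` and `(T₂, K, K)` are again triality triples. -/
theorem twisted_pair_derived_trialities (T1 T2 : Oct →ₗ[ℂ] Oct) (h : TwistedPair T1 T2)
    (x y : Oct) :
    omul (Kmap T1 x) (T1 y) = T2 (omul x y) ∧
      omul (T2 x) (Kmap T1 y) = Kmap T1 (omul x y) :=
  ⟨first_identity T1 T2 h x y, second_identity T1 T2 h x y⟩

end Oct
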